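/- arXiv:1307.0857 — 4 statements merged into one kernel-verified Lean document; each statement's English description precedes it below -/
import Mathlib

section
/- Let f : F_2^n → F_2^n be a Boolean network and let I_f be the ideal of the ring B of functions F_2^n → F_2 generated by m_f(x) = 1 + ∏_{i=1}^n (f_i(x) + x_i + 1). Then the F_2-dimension of the quotient B / I_f equals the number of fixed points of f. -/
/-- The polynomial `m_f` associated to a Boolean network `f`. -/
def mf {n : ℕ} (f : (Fin n → ZMod 2) → (Fin n → ZMod 2)) (x : Fin n → ZMod 2) : ZMod 2 :=
  1 + ∏ i, (f x i + x i + 1)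

lemma mf_eq {n : ℕ} (f : (Fin n → ZMod 2) → (Fin n → ZMod 2)) (x : Fin n → ZMod 2) :
    mf f x = if f x = x then 0 else 1 := by
  unfold mf
  by_cases h : f x = x
  · rw [if_pos h]
    have : ∏ i : Fin n, (f x i + x i + 1) = 1 := by
      apply Finset.prod_eq_one
      intro i _
      rw [h]
      have : ∀ a : ZMod 2, a + a + 1 = 1 := by decide
      exact this (x i)
    rw [this]; decide
  · rw [if_neg h]
    obtain ⟨i, hi⟩ : ∃ i, f x i ≠ x i := by
      by_contra hc
      push_neg at hc
      exact h (funext hc)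
    have : ∏ i : Fin n, (f x i + x i + 1) = 0 := by
      apply Finset.prod_eq_zero (Finset.mem_univ i)
      have : ∀ a b : ZMod 2, a ≠ b → a + b + 1 = 0 := by decide
      exact this _ _ hi
    rw [this]; decide

theorem stmt_5 (n : ℕ) (f : (Fin n → ZMod 2) → (Fin n → ZMod 2)) :
    Module.finrank (ZMod 2)
      (((Fin n → ZMod 2) → ZMod 2) ⧸ Ideal.span {mf f}) =
      Nat.card {x : Fin n → ZMod 2 // f x = x} := by
  set S := {x : Fin n → ZMod 2 // f x = x}
  let φ : ((Fin n → ZMod 2) → ZMod 2) →ₐ[ZMod 2] (S → ZMod 2) :=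
    { toFun := fun g s => g s.1
      map_one' := rfl
      map_mul' := fun _ _ => rfl
      map_zero' := rfl
      map_add' := fun _ _ => rfl
      commutes' := fun _ => rfl }
  have hsurj : Function.Surjective φ := by
    intro h
    refine ⟨fun x => if hx : f x = x then h ⟨x, hx⟩ else 0, ?_⟩
    funext s
    simp only [φ]
    exact dif_pos s.2
  have hker : RingHom.ker φ = Ideal.span {mf f} := by
    ext g
    constructor
    · intro hg
      have hg' : ∀ s : S, g s.1 = 0 := fun s => congrFun hg s
      rw [Ideal.mem_span_singleton]
      refine ⟨g, ?_⟩
      funext x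
      by_cases hx : f x = x
      · have : g x = 0 := hg' ⟨x, hx⟩
        show g x = mf f x * g x
        rw [this, mul_zero]
      · show g x = mf f x * g x
        rw [mf_eq, if_neg hx, one_mul]
    · intro hg
      rw [Ideal.mem_span_singleton] at hg
      obtain ⟨c, rfl⟩ := hg
      funext s
      show mf f s.1 * c s.1 = 0
      rw [mf_eq, if_pos s.2, zero_mul]
  have e : (((Fin n → ZMod 2) → ZMod 2) ⧸ Ideal.span {mf f}) ≃ₐ[ZMod 2] (S → ZMod 2) := by
    rw [← hker]
    exact Ideal.quotientKerAlgEquivOfSurjective hsurj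
  rw [e.toLinearEquiv.finrank_eq, Module.finrank_pi, Nat.card_eq_fintype_card]
end

section
/- Let f be a Boolean network on n nodes. Then f has exactly two fixed points if and only if the quotient B / I_f of the ring of Boolean functions by the ideal generated by m_f has exactly 4 elements. -/
lemma mf_zero_iff {n : ℕ} (f : (Fin n → ZMod 2) → (Fin n → ZMod 2)) (x : Fin n → ZMod 2) :
    mf f x = 0 ↔ f x = x := by
  have h2 : ∀ a : ZMod 2, (1 + a = 0 ↔ a = 1) := by decide
  have h3 : ∀ a : ZMod 2, (a ≠ 0 ↔ a = 1) := by decide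
  have h4 : ∀ a b : ZMod 2, (a + b + 1 = 1 ↔ a = b) := by decide
  rw [mf, h2, ← h3, Finset.prod_ne_zero_iff]
  constructor
  · intro h
    funext i
    exact (h4 _ _).mp ((h3 _).mp (h i (Finset.mem_univ i)))
  · intro h i _
    rw [h3, h4, h]

theorem stmt_7 (n : ℕ) (f : (Fin n → ZMod 2) → (Fin n → ZMod 2)) :
    Nat.card {x : Fin n → ZMod 2 // f x = x} = 2 ↔
      Nat.card (((Fin n → ZMod 2) → ZMod 2) ⧸ Ideal.span {mf f}) = 4 := by
  set m := mf f with hm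
  -- restriction ring hom to the zero set of m
  let S := {x : Fin n → ZMod 2 // m x = 0}
  let φ : ((Fin n → ZMod 2) → ZMod 2) →+* (S → ZMod 2) :=
    Pi.ringHom fun s => Pi.evalRingHom _ s.val
  have hsurj : Function.Surjective φ := by
    intro h
    refine ⟨fun x => if hx : m x = 0 then h ⟨x, hx⟩ else 0, ?_⟩
    funext s
    simp [φ, Pi.ringHom, s.prop]
  have hker : RingHom.ker φ = Ideal.span {m} := by
    ext g
    rw [RingHom.mem_ker, Ideal.mem_span_singleton']
    constructor
    · intro h
      refine ⟨g, ?_⟩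
      funext x
      have h01 : m x = 0 ∨ m x = 1 := by
        have : ∀ a : ZMod 2, a = 0 ∨ a = 1 := by decide
        exact this _
      rcases h01 with h0 | h1
      · have : g x = 0 := congrFun h ⟨x, h0⟩
        simp [Pi.mul_apply, h0, this]
      · simp [Pi.mul_apply, h1]
    · rintro ⟨a, rfl⟩
      funext s
      have : m s.val = 0 := s.prop
      simp [φ, Pi.ringHom, Pi.mul_apply, this]
  have e : (((Fin n → ZMod 2) → ZMod 2) ⧸ Ideal.span {m}) ≃+* (S → ZMod 2) :=
    hker ▸ RingHom.quotientKerEquivOfSurjective hsurj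
  have hcard : Nat.card (((Fin n → ZMod 2) → ZMod 2) ⧸ Ideal.span {m}) =
      2 ^ Nat.card S := by
    rw [Nat.card_congr e.toEquiv, Nat.card_fun, Nat.card_eq_fintype_card (α := ZMod 2),
      ZMod.card]
  have hS : Nat.card S = Nat.card {x : Fin n → ZMod 2 // f x = x} := by
    apply Nat.card_congr
    exact Equiv.subtypeEquivRight (fun x => mf_zero_iff f x)
  rw [hcard, hS]
  constructor
  · intro h; rw [h]; norm_num
  · intro h
    have : (2 : ℕ) ^ Nat.card {x : Fin n → ZMod 2 // f x = x} = 2 ^ 2 := h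
    exact Nat.pow_right_injective le_rfl this
end

section
/- A Boolean network f on n nodes has exactly the two distinct fixed points a and b if and only if 1 + m_f = p_a + p_b as functions F_2^n → F_2. -/
def pa {n : ℕ} (a : Fin n → ZMod 2) (x : Fin n → ZMod 2) : ZMod 2 :=
  ∏ i, (x i + a i + 1)

lemma factor_char (u v : ZMod 2) : u + v + 1 = if u = v then 1 else 0 := by
  revert u v; decide

lemma prod_char {n : ℕ} (x a : Fin n → ZMod 2) :
    (∏ i, (x i + a i + 1)) = if x = a then 1 else 0 := by
  by_cases h : x = a
  · simp [h, factor_char]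
  · rw [if_neg h]
    obtain ⟨i, hi⟩ : ∃ i, x i ≠ a i := by
      by_contra hc; push_neg at hc; exact h (funext hc)
    exact Finset.prod_eq_zero (Finset.mem_univ i) (by rw [factor_char, if_neg hi])

lemma pa_char {n : ℕ} (a x : Fin n → ZMod 2) : pa a x = if x = a then 1 else 0 :=
  prod_char x a

theorem stmt_14 (n : ℕ) (f : (Fin n → ZMod 2) → (Fin n → ZMod 2))
    (a b : Fin n → ZMod 2) (hab : a ≠ b) :
    (∀ x, f x = x ↔ (x = a ∨ x = b)) ↔
      ∀ x, 1 + mf f x = pa a x + pa b x := by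
  have hm : ∀ x, 1 + mf f x = if f x = x then 1 else 0 := by
    intro x
    rw [mf, ← add_assoc]
    have : (1 : ZMod 2) + 1 = 0 := by decide
    rw [this, zero_add]
    exact prod_char (f x) x
  constructor
  · intro h x
    rw [hm, pa_char, pa_char]
    by_cases hxa : x = a
    · subst hxa
      rw [if_pos ((h x).mpr (Or.inl rfl)), if_pos rfl, if_neg hab]
      ring
    · by_cases hxb : x = b
      · subst hxb
        rw [if_pos ((h x).mpr (Or.inr rfl)), if_neg hxa, if_pos rfl]
        ring
      · rw [if_neg (fun hf => hxa (((h x).mp hf).resolve_right hxb)),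
          if_neg hxa, if_neg hxb]
        ring
  · intro h x
    have hx := h x
    rw [hm, pa_char, pa_char] at hx
    constructor
    · intro hf
      rw [if_pos hf] at hx
      by_contra hc
      push_neg at hc
      rw [if_neg hc.1, if_neg hc.2] at hx
      exact one_ne_zero (α := ZMod 2) (by simpa using hx)
    · rintro (rfl | rfl)
      · rw [if_pos rfl, if_neg hab] at hx
        by_contra hf
        rw [if_neg hf] at hx
        simp at hx
      · rw [if_neg (Ne.symm hab), if_pos rfl] at hx
        by_contra hf
        rw [if_neg hf] at hx
        simp at hx
end

section
/- For any Boolean network f on n nodes with fixed point set S, and any functions g, h : F_2^n → F_2 agreeing on S (g(a) = h(a) for all a ∈ S), the difference g + h lies in the ideal I_f generated by m_f. -/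
theorem stmt_19 (n : ℕ) (f : (Fin n → ZMod 2) → (Fin n → ZMod 2))
    (g h : (Fin n → ZMod 2) → ZMod 2)
    (hgh : ∀ a : Fin n → ZMod 2, f a = a → g a = h a) :
    g + h ∈ Ideal.span {mf f} := by
  rw [Ideal.mem_span_singleton]
  refine ⟨g + h, funext fun x => ?_⟩
  show g x + h x = mf f x * (g x + h x)
  by_cases hx : f x = x
  · have := hgh x hx
    rw [this]
    rw [CharTwo.add_self_eq_zero, mul_zero]
  · have : mf f x = 1 := by
      unfold mf
      obtain ⟨i, hi⟩ : ∃ i, f x i ≠ x i := by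
        by_contra hc
        push_neg at hc
        exact hx (funext hc)
      have hz : f x i + x i + 1 = 0 := by
        have : ∀ a b : ZMod 2, a ≠ b → a + b + 1 = 0 := by decide
        exact this _ _ hi
      rw [Finset.prod_eq_zero (Finset.mem_univ i) hz, add_zero]
    rw [this, one_mul]
end
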